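/- Let F be a field, let u, v be (possibly countably infinite) index sets, and let A be a u × v matrix over F with finitely many nonzero entries per row. Then there exist an index set J and a J × u matrix B over F with finitely many nonzero entries per row such that B A = O and the kernel of B equals the range of A, i.e. {y ∈ F^u : B y = 0} = {A x : x ∈ F^v}. (In particular, the range of A, viewed as a continuous linear map F^v → F^u with the product topologies, is closed.) -/

import Mathlib

open scoped BigOperators

/-- Matrix–vector product over a field, via `finsum`. -/
noncomputable def fMulVec {u v F : Type} [Field F] (A : u → v → F) (x : v → F) : u → F :=
  fun i => ∑ᶠ j, A i j * x j

lemma finsum_mul_eq {F : Type} [Field F] {u : Type} (w : u →₀ F) (y : u → F) :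
    (∑ᶠ i, w i * y i) = Finsupp.linearCombination F y w := by
  rw [Finsupp.linearCombination_apply, Finsupp.sum]
  rw [finsum_eq_finset_sum_of_support_subset _ (s := w.support) ?h]
  · simp [smul_eq_mul]
  · intro i hi
    rw [Function.mem_support] at hi
    exact Finset.mem_coe.mpr (Finsupp.mem_support_iff.mpr (left_ne_zero_of_mul hi))

/-- for any `u × v` matrix `A` over a field `F` (with `u, v` at most
countable and finitely many nonzero entries per row) there exist an index set `J`
and a `J × u` matrix `B` (finitely many nonzero entries per row) with `B A = O`
and `K(B) = R(A)`. -/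
theorem stmt6 {F : Type} [Field F] {u v : Type} [Countable u] [Countable v]
    (A : u → v → F) (hA : ∀ i, (Function.support (A i)).Finite) :
    ∃ (J : Type) (B : J → u → F),
      (∀ j, (Function.support (B j)).Finite) ∧
      (∀ j k, (∑ᶠ i, B j i * A i k) = 0) ∧
      ({y : u → F | ∀ j, fMulVec B y j = 0} =
        {y : u → F | ∃ x : v → F, y = fMulVec A x}) := by
  classical
  set r : u → (v →₀ F) := fun i => Finsupp.ofSupportFinite (A i) (hA i) with hrdef
  have hrA : ∀ i k, r i k = A i k := fun i k => rfl
  obtain ⟨I, hli, hmax⟩ := exists_maximal_linearIndepOn F r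
  have hc : ∀ j : {j : u // j ∉ I}, ∃ c : u →₀ F, ↑c.support ⊆ I ∧
      Finsupp.linearCombination F r c = r j.1 := by
    intro j
    obtain ⟨a, ha, hmem⟩ := hmax j.1 j.2
    have hmem' : r j.1 ∈ Submodule.span F (r '' I) := by
      have h2 := Submodule.smul_mem _ a⁻¹ hmem
      rwa [smul_smul, inv_mul_cancel₀ ha, one_smul] at h2
    rw [Finsupp.mem_span_image_iff_linearCombination] at hmem'
    obtain ⟨l, hl, hl2⟩ := hmem'
    exact ⟨l, (Finsupp.mem_supported F l).mp hl, hl2⟩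
  choose c hcsupp hcsum using hc
  set b : {j : u // j ∉ I} → u →₀ F := fun j => Finsupp.single j.1 1 - c j with hb
  have hbcomb : ∀ (j : {j : u // j ∉ I}) (y : u → F),
      (∑ᶠ i, b j i * y i) = y j.1 - Finsupp.linearCombination F y (c j) := by
    intro j y
    rw [finsum_mul_eq (b j) y, hb]
    simp [Finsupp.linearCombination_single]
  have hcombzero : ∀ j : {j : u // j ∉ I}, Finsupp.linearCombination F r (b j) = 0 := by
    intro j
    simp only [hb, map_sub, Finsupp.linearCombination_single, one_smul, hcsum j, sub_self]
  refine ⟨{j : u // j ∉ I}, fun j i => b j i, fun j => (b j).finite_support, ?_, ?_⟩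
  · intro j k
    have := finsum_mul_eq (b j) (fun i => A i k)
    rw [this]
    have h2 : (fun i => A i k) = (Finsupp.lapply (M := F) (R := F) k) ∘ r := rfl
    rw [h2, ← Finsupp.apply_linearCombination, hcombzero j]
    simp
  · ext y
    simp only [Set.mem_setOf_eq]
    constructor
    · intro hy
      -- build a functional extending i ↦ y i on the independent rows
      set W := Submodule.span F (Set.range fun i : I => r i) with hW
      set f₀ : W →ₗ[F] F :=
        (Finsupp.linearCombination F fun i : I => y i) ∘ₗ (hli.repr : W →ₗ[F] (I →₀ F)) with hf₀
      obtain ⟨f, hf⟩ := f₀.exists_extend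
      have hfr : ∀ i : I, f (r i) = y i := by
        intro i
        have hmem : r i ∈ W := Submodule.subset_span ⟨i, rfl⟩
        have h1 : f (r i) = f₀ ⟨r i, hmem⟩ := by
          have := congrArg (fun g => g ⟨r i, hmem⟩) hf
          simpa using this
        rw [h1, hf₀]
        simp only [LinearMap.coe_comp, Function.comp_apply, LinearMap.coe_coe]
        rw [hli.repr_eq_single i ⟨r i, hmem⟩ rfl]
        simp
      set x : v → F := fun k => f (Finsupp.single k 1) with hx
      have hfw : ∀ w : v →₀ F, f w = Finsupp.linearCombination F x w := by
        intro w
        have h1 : Finsupp.linearCombination F (fun k => Finsupp.single k (1 : F)) w = w := by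
          rw [Finsupp.linearCombination_apply]
          conv_rhs => rw [← Finsupp.sum_single w]
          exact Finsupp.sum_congr fun k _ => by rw [Finsupp.smul_single, smul_eq_mul, mul_one]
        conv_lhs => rw [← h1]
        rw [Finsupp.apply_linearCombination]
        rfl
      have hfry : ∀ i, f (r i) = y i := by
        intro i
        by_cases hi : i ∈ I
        · exact hfr ⟨i, hi⟩
        · have hj := hy ⟨i, hi⟩
          rw [show fMulVec (fun j i => b j i) y ⟨i, hi⟩ = ∑ᶠ i', b ⟨i, hi⟩ i' * y i' from rfl,
            hbcomb ⟨i, hi⟩ y, sub_eq_zero] at hj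
          have h1 : f (r i) = Finsupp.linearCombination F (f ∘ r) (c ⟨i, hi⟩) := by
            rw [← Finsupp.apply_linearCombination]
            exact congrArg f (hcsum ⟨i, hi⟩).symm
          rw [h1, hj]
          rw [Finsupp.linearCombination_apply, Finsupp.linearCombination_apply]
          apply Finsupp.sum_congr
          intro i' hi'
          have : i' ∈ I := hcsupp ⟨i, hi⟩ hi'
          simp [hfr ⟨i', this⟩, Function.comp]
      refine ⟨x, funext fun i => ?_⟩
      have : fMulVec A x i = ∑ᶠ k, r i k * x k := rfl
      rw [this, finsum_mul_eq (r i) x, ← hfw, hfry]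
    · rintro ⟨x, rfl⟩ j
      have hAi : ∀ i, fMulVec A x i = Finsupp.linearCombination F x (r i) := by
        intro i
        exact finsum_mul_eq (r i) x
      have : fMulVec (fun j i => b j i) (fMulVec A x) j = ∑ᶠ i, b j i * fMulVec A x i := rfl
      rw [this, finsum_mul_eq (b j) (fMulVec A x)]
      have h2 : fMulVec A x = (Finsupp.linearCombination F x) ∘ r := funext hAi
      rw [h2, ← Finsupp.apply_linearCombination, hcombzero j]
      simp
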